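/- Fix r∈(0,1) and positive integers n<N, and let p=(p_0,…,p_N)∈(0,1]^{N+1} with p_0 + Σ_{i=1}^{N−1} 2p_i + 2p_N/(1−r) = 1. Extend by p_{−i}:=p_i for 1≤i≤N and p_i:=p_N r^{|i|−N} for |i|>N, and let P be the probability measure with cactus density f_{n,r,p}. Then sup_{a∈ℝ, |a|≤1} D(P ‖ T_a P) = max_{k∈ℤ, |k|≤n} Σ_{i∈ℤ} p_i log(p_i / p_{i+k}). -/

import Mathlib

open MeasureTheory Filter Real Set
open scoped ENNReal NNReal Classical

noncomputable section

/-- Shift operator on Borel measures: `(shiftMeasure a μ) B = μ (B - a)`. -/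
def shiftMeasure (a : ℝ) (μ : Measure ℝ) : Measure ℝ := μ.map (· + a)

/-- Kullback–Leibler divergence between Borel measures on `ℝ`. -/
def KLdiv (μ ν : Measure ℝ) : ℝ≥0∞ :=
  if μ ≪ ν ∧ Integrable (llr μ ν) μ then ENNReal.ofReal (∫ x, llr μ ν x ∂μ) else ⊤

/-- Standing assumptions on the cost function. -/
structure IsCostFun (c : ℝ → ℝ) (α β : ℝ) : Prop where
  nonneg : ∀ x, 0 ≤ c x
  zero : c 0 = 0
  even : ∀ x, c (-x) = c x
  mono : ∀ x y : ℝ, |x| ≤ |y| → c x ≤ c y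
  continuous : Continuous c
  tail : Tendsto (fun x : ℝ => c x / (β * x ^ α)) atTop (nhds 1)


/-- Index `i` of the interval `J_{n,i}` containing `x` (with `J_{n,0} = [-1/(2n), 1/(2n)]`,
`J_{n,i} = ((i-1/2)/n, (i+1/2)/n]` for `i > 0`, and the mirror image for `i < 0`). -/
def cactusIdx (n : ℕ) (x : ℝ) : ℤ :=
  if 0 ≤ x then ⌈(n : ℝ) * x - 1/2⌉ else ⌊(n : ℝ) * x + 1/2⌋

/-- Extension of the vector `(p_0, …, p_N)` to all integer indices:
`p_{-i} = p_i` and `p_i = p_N r^(|i|-N)` for `|i| > N`. -/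
def extSeq (N : ℕ) (r : ℝ) (p : ℕ → ℝ) (i : ℤ) : ℝ :=
  if i.natAbs ≤ N then p i.natAbs else p N * r ^ (i.natAbs - N)

/-- The cactus density `f_{n,r,p}`: equal to `n * p_{|i|}` on `J_{n,i}` for `|i| ≤ N`
and to `n * p_N * r^(|i|-N)` on `J_{n,i}` for `|i| > N`. -/
def cactusDensity (n N : ℕ) (r : ℝ) (p : ℕ → ℝ) (x : ℝ) : ℝ :=
  (n : ℝ) * extSeq N r p (cactusIdx n x)

/-- The cactus measure `P_{n,r,p}`. -/
def cactusMeasure (n N : ℕ) (r : ℝ) (p : ℕ → ℝ) : Measure ℝ :=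
  volume.withDensity fun x => ENNReal.ofReal (cactusDensity n N r p x)

/-- Normalization constant `S_{r,p} = p_0 + Σ_{i=1}^{N-1} 2 p_i + 2 p_N / (1-r)`. -/
def Snorm (N : ℕ) (r : ℝ) (p : ℕ → ℝ) : ℝ :=
  p 0 + (∑ i ∈ Finset.Icc 1 (N - 1), 2 * p i) + 2 * p N / (1 - r)


/-- Auxiliary: ceiling-based interval index. -/
def Jfl (n : ℕ) (x : ℝ) : ℤ := ⌈(n : ℝ) * x - 1/2⌉

/-- Auxiliary sum. -/
def cSum (N : ℕ) (r : ℝ) (p : ℕ → ℝ) (k : ℤ) : ℝ :=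
  ∑' i : ℤ, extSeq N r p i * (Real.log (extSeq N r p i) - Real.log (extSeq N r p (i - k)))

section CactusAux

variable {N n : ℕ} {r : ℝ} {p : ℕ → ℝ}

lemma extSeq_pos (hr : r ∈ Set.Ioo (0:ℝ) 1) (hp : ∀ i ≤ N, p i ∈ Set.Ioc (0:ℝ) 1) (i : ℤ) :
    0 < extSeq N r p i := by
  unfold extSeq
  split
  · exact (hp _ ‹_›).1
  · exact mul_pos (hp N le_rfl).1 (pow_pos hr.1 _)

lemma extSeq_le_one (hr : r ∈ Set.Ioo (0:ℝ) 1) (hp : ∀ i ≤ N, p i ∈ Set.Ioc (0:ℝ) 1) (i : ℤ) :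
    extSeq N r p i ≤ 1 := by
  unfold extSeq
  split
  · exact (hp _ ‹_›).2
  · have h1 := (hp N le_rfl).2
    have h2 := pow_le_one₀ hr.1.le hr.2.le (n := i.natAbs - N)
    nlinarith [(hp N le_rfl).1, pow_pos hr.1 (i.natAbs - N)]

lemma extSeq_neg (i : ℤ) : extSeq N r p (-i) = extSeq N r p i := by
  simp [extSeq]

lemma extSeq_le_geom (hr : r ∈ Set.Ioo (0:ℝ) 1) (hp : ∀ i ≤ N, p i ∈ Set.Ioc (0:ℝ) 1) (i : ℤ) :
    extSeq N r p i ≤ r ^ i.natAbs / r ^ N := by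
  have hrN : (0:ℝ) < r ^ N := pow_pos hr.1 _
  unfold extSeq
  split
  · have h1 : r ^ N ≤ r ^ i.natAbs := pow_le_pow_of_le_one hr.1.le hr.2.le ‹_›
    calc p i.natAbs ≤ 1 := (hp _ ‹_›).2
      _ ≤ r ^ i.natAbs / r ^ N := (one_le_div hrN).2 h1
  · have h : N ≤ i.natAbs := le_of_not_ge ‹_›
    rw [pow_sub₀ _ hr.1.ne' h]
    calc p N * (r ^ i.natAbs * (r ^ N)⁻¹) ≤ 1 * (r ^ i.natAbs * (r ^ N)⁻¹) := by
          apply mul_le_mul_of_nonneg_right (hp N le_rfl).2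
          exact mul_nonneg (pow_nonneg hr.1.le _) (inv_nonneg.2 (pow_nonneg hr.1.le _))
      _ = r ^ i.natAbs / r ^ N := by rw [one_mul, div_eq_mul_inv]

lemma exists_log_bound (hr : r ∈ Set.Ioo (0:ℝ) 1) (hp : ∀ i ≤ N, p i ∈ Set.Ioc (0:ℝ) 1) :
    ∃ A L : ℝ, 0 ≤ A ∧ 0 ≤ L ∧
      ∀ i : ℤ, |Real.log (extSeq N r p i)| ≤ A + L * i.natAbs := by
  classical
  have hne : (Finset.Icc 0 N).Nonempty := ⟨0, by simp⟩
  set m : ℝ := (Finset.Icc 0 N).inf' hne p with hm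
  have hm_pos : 0 < m := by
    rw [hm, Finset.lt_inf'_iff]
    intro b hb
    exact (hp b (Finset.mem_Icc.1 hb).2).1
  have hm_le : ∀ j ≤ N, m ≤ p j := fun j hj =>
    Finset.inf'_le _ (Finset.mem_Icc.2 ⟨Nat.zero_le _, hj⟩)
  have hm_le_one : m ≤ 1 := (hm_le 0 (Nat.zero_le _)).trans (hp 0 (Nat.zero_le _)).2
  refine ⟨-Real.log m, -Real.log r, ?_, ?_, ?_⟩
  · simp only [neg_nonneg]; exact Real.log_nonpos hm_pos.le hm_le_one
  · simp only [neg_nonneg]; exact Real.log_nonpos hr.1.le hr.2.le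
  · intro i
    have hlow : m * r ^ i.natAbs ≤ extSeq N r p i := by
      unfold extSeq
      split
      · calc m * r ^ i.natAbs ≤ m * 1 :=
            mul_le_mul_of_nonneg_left (pow_le_one₀ hr.1.le hr.2.le) hm_pos.le
          _ = m := mul_one m
          _ ≤ p i.natAbs := hm_le _ ‹_›
      · have h : N ≤ i.natAbs := le_of_not_ge ‹_›
        calc m * r ^ i.natAbs ≤ m * r ^ (i.natAbs - N) := by
              apply mul_le_mul_of_nonneg_left _ hm_pos.le
              exact pow_le_pow_of_le_one hr.1.le hr.2.le (Nat.sub_le _ _)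
          _ ≤ p N * r ^ (i.natAbs - N) :=
              mul_le_mul_of_nonneg_right (hm_le N le_rfl) (pow_pos hr.1 _).le
    have hpos := extSeq_pos hr hp i
    have hub := extSeq_le_one hr hp i
    have hlog_le : Real.log (extSeq N r p i) ≤ 0 := Real.log_nonpos hpos.le hub
    have hlog_ge : Real.log m + i.natAbs * Real.log r ≤ Real.log (extSeq N r p i) := by
      have := Real.log_le_log (mul_pos hm_pos (pow_pos hr.1 _)) hlow
      rwa [Real.log_mul hm_pos.ne' (pow_pos hr.1 _).ne', Real.log_pow] at this
    rw [abs_of_nonpos hlog_le]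
    have : (i.natAbs : ℝ) * Real.log r = -((-Real.log r) * i.natAbs) := by ring
    nlinarith [hlog_ge]

lemma summable_geom_aux (hr : r ∈ Set.Ioo (0:ℝ) 1) (c0 c1 : ℝ) :
    Summable (fun i : ℤ => (c0 + c1 * (i.natAbs : ℝ)) * r ^ i.natAbs) := by
  have hnat : Summable (fun n : ℕ => (c0 + c1 * (n : ℝ)) * r ^ n) := by
    have h1 := (summable_geometric_of_lt_one hr.1.le hr.2).mul_left c0
    have h2 := (summable_pow_mul_geometric_of_norm_lt_one 1
      (by rw [Real.norm_eq_abs, abs_of_pos hr.1]; exact hr.2 : ‖r‖ < 1)).mul_left c1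
    exact ((h1.add h2).congr (fun n => by push_cast; ring))
  exact Summable.of_nat_of_neg (by simpa using hnat) (by simpa using hnat)

lemma summable_extSeq_mul (hr : r ∈ Set.Ioo (0:ℝ) 1) (hp : ∀ i ≤ N, p i ∈ Set.Ioc (0:ℝ) 1)
    {c0 c1 : ℝ} {w : ℤ → ℝ} (hw : ∀ i, |w i| ≤ c0 + c1 * i.natAbs) :
    Summable (fun i : ℤ => extSeq N r p i * w i) := by
  apply Summable.of_norm_bounded (summable_geom_aux hr (c0 / r ^ N) (c1 / r ^ N))
  intro i
  have hq := extSeq_pos hr hp i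
  have hgeom := extSeq_le_geom hr hp i
  have habs : 0 ≤ c0 + c1 * i.natAbs := (abs_nonneg _).trans (hw i)
  have : ‖extSeq N r p i * w i‖ = extSeq N r p i * |w i| := by
    rw [Real.norm_eq_abs, abs_mul, abs_of_pos hq]
  rw [this]
  calc extSeq N r p i * |w i| ≤ (r ^ i.natAbs / r ^ N) * (c0 + c1 * i.natAbs) :=
        mul_le_mul hgeom (hw i) (abs_nonneg _) (div_nonneg (pow_nonneg hr.1.le _) (pow_nonneg hr.1.le _))
    _ = (c0 / r ^ N + c1 / r ^ N * i.natAbs) * r ^ i.natAbs := by ring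

lemma summable_cSum_term (hr : r ∈ Set.Ioo (0:ℝ) 1) (hp : ∀ i ≤ N, p i ∈ Set.Ioc (0:ℝ) 1)
    (k : ℤ) :
    Summable (fun i : ℤ =>
      extSeq N r p i * (Real.log (extSeq N r p i) - Real.log (extSeq N r p (i - k)))) := by
  obtain ⟨A, L, hA, hL, hlog⟩ := exists_log_bound hr hp
  apply summable_extSeq_mul hr hp (c0 := 2 * A + L * k.natAbs) (c1 := 2 * L)
  intro i
  have h1 := hlog i
  have h2 := hlog (i - k)
  have h3 : ((i - k).natAbs : ℝ) ≤ (i.natAbs : ℝ) + (k.natAbs : ℝ) := by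
    exact_mod_cast Int.natAbs_sub_le i k
  calc |Real.log (extSeq N r p i) - Real.log (extSeq N r p (i - k))|
      ≤ |Real.log (extSeq N r p i)| + |Real.log (extSeq N r p (i - k))| := abs_sub _ _
    _ ≤ 2 * A + L * k.natAbs + 2 * L * i.natAbs := by nlinarith

lemma cSum_eq_rhs (hr : r ∈ Set.Ioo (0:ℝ) 1) (hp : ∀ i ≤ N, p i ∈ Set.Ioc (0:ℝ) 1) (k : ℤ) :
    (∑' i : ℤ, extSeq N r p i * Real.log (extSeq N r p i / extSeq N r p (i + k)))
      = cSum N r p k := by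
  have hstep : (fun i : ℤ => extSeq N r p i * Real.log (extSeq N r p i / extSeq N r p (i + k)))
      = fun i : ℤ => extSeq N r p i *
          (Real.log (extSeq N r p i) - Real.log (extSeq N r p (i + k))) := by
    funext i
    rw [Real.log_div (extSeq_pos hr hp i).ne' (extSeq_pos hr hp (i + k)).ne']
  rw [hstep, cSum]
  rw [← (Equiv.neg ℤ).tsum_eq
    (fun i : ℤ => extSeq N r p i * (Real.log (extSeq N r p i) - Real.log (extSeq N r p (i + k))))]
  apply tsum_congr
  intro i
  have h1 : (Equiv.neg ℤ) i = -i := rfl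
  have h2 : -i + k = -(i - k) := by ring
  rw [h1, h2, extSeq_neg, extSeq_neg]


lemma Jfl_eq_iff (hn : 0 < n) {x : ℝ} {i : ℤ} :
    Jfl n x = i ↔ x ∈ Set.Ioc (((i:ℝ) - 1/2)/n) (((i:ℝ) + 1/2)/n) := by
  have hn' : (0:ℝ) < n := by exact_mod_cast hn
  rw [Jfl, Int.ceil_eq_iff, Set.mem_Ioc, div_lt_iff₀ hn', ← sub_nonneg (b := x)]
  have hc : (n:ℝ) * x = x * n := mul_comm _ _
  rw [sub_nonneg]
  constructor
  · rintro ⟨h1, h2⟩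
    constructor
    · linarith
    · rw [le_div_iff₀ hn']; linarith
  · rintro ⟨h1, h2⟩
    rw [le_div_iff₀ hn'] at h2
    constructor <;> linarith

lemma measurable_Jfl : Measurable (Jfl n) := by
  apply Measurable.ceil
  exact (measurable_const.mul measurable_id).sub measurable_const

lemma measurable_cactusIdx : Measurable (cactusIdx n) := by
  unfold cactusIdx
  apply Measurable.ite (measurableSet_le measurable_const measurable_id)
  · exact ((measurable_const.mul measurable_id).sub measurable_const).ceil
  · exact ((measurable_const.mul measurable_id).add measurable_const).floor

lemma cactusIdx_bad_subset (hn : 0 < n) :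
    {y : ℝ | cactusIdx n y ≠ Jfl n y} ⊆ Set.range (fun m : ℤ => ((m:ℝ) - 1/2)/n) := by
  intro x hx
  simp only [Set.mem_setOf_eq] at hx
  by_cases hx0 : 0 ≤ x
  · exact absurd (by rw [cactusIdx, if_pos hx0]; rfl) hx
  · rw [cactusIdx, if_neg hx0] at hx
    set y : ℝ := (n:ℝ) * x + 1/2 with hy
    by_contra hm
    apply hx
    have hyne : (⌊y⌋ : ℝ) ≠ y := by
      intro h
      apply hm
      refine ⟨⌊y⌋, ?_⟩
      have hn' : (0:ℝ) < n := by exact_mod_cast hn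
      show ((⌊y⌋:ℝ) - 1/2)/n = x; rw [div_eq_iff hn'.ne']
      linarith [h]
    have hfl : (⌊y⌋:ℝ) < y := lt_of_le_of_ne (Int.floor_le y) hyne
    have hceil : ⌈y⌉ = ⌊y⌋ + 1 := by
      apply le_antisymm
      · apply Int.ceil_le.2
        push_cast
        linarith [Int.lt_floor_add_one y]
      · have : (⌊y⌋:ℝ) < (⌈y⌉:ℝ) := lt_of_lt_of_le hfl (Int.le_ceil y)
        exact_mod_cast Int.add_one_le_of_lt (by exact_mod_cast this)
    have : (n:ℝ) * x - 1/2 = y - 1 := by rw [hy]; ring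
    rw [Jfl, this, Int.ceil_sub_one, hceil]
    ring
lemma volume_bad_eq_zero (hn : 0 < n) (a : ℝ) :
    ∀ᵐ x : ℝ, cactusIdx n (x - a) = Jfl n (x - a) := by
  rw [ae_iff]
  refine measure_mono_null ?_
    (Set.Countable.measure_zero (((Set.countable_range (fun m : ℤ => ((m:ℝ) - 1/2)/n))).image
      (fun y : ℝ => y + a)) volume)
  intro x hx
  simp only [Set.mem_setOf_eq, not_not] at hx
  have : x - a ∈ Set.range (fun m : ℤ => ((m:ℝ) - 1/2)/n) :=
    cactusIdx_bad_subset hn hx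
  exact ⟨x - a, this, by ring⟩


lemma shiftMeasure_withDensity {F : ℝ → ℝ≥0∞} (hF : Measurable F) (a : ℝ) :
    shiftMeasure a (volume.withDensity F) = volume.withDensity (fun x => F (x - a)) := by
  unfold shiftMeasure
  ext s hs
  have hpre : MeasurableSet ((· + a) ⁻¹' s) := (measurable_add_const a) hs
  rw [Measure.map_apply (measurable_add_const a) hs, withDensity_apply _ hpre,
    withDensity_apply _ hs]
  rw [← lintegral_indicator hpre F, ← lintegral_indicator hs (fun y => F (y - a))]
  have key := lintegral_add_right_eq_self (μ := volume)
    (fun x => s.indicator (fun y => F (y - a)) x) a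
  rw [← key]
  apply lintegral_congr
  intro x
  by_cases h : x + a ∈ s
  · simp [Set.indicator_of_mem, h, Set.mem_preimage, add_sub_cancel_right]
  · simp [Set.indicator_of_notMem, h, Set.mem_preimage]

-- rnDeriv computation
lemma rnDeriv_withDensity_ofPos {F G : ℝ → ℝ≥0∞} (hF : Measurable F) (hG : Measurable G)
    (hGpos : ∀ x, G x ≠ 0) (hFfin : ∀ x, F x ≠ ∞) (hGfin : ∀ x, G x ≠ ∞) :
    (volume.withDensity F).rnDeriv (volume.withDensity G)
      =ᵐ[volume] fun x => F x * (G x)⁻¹ := by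
  have hsf1 : SigmaFinite (volume.withDensity F) :=
    SigmaFinite.withDensity_of_ne_top (ae_of_all _ hFfin)
  have hsf2 : SigmaFinite (volume.withDensity G) :=
    SigmaFinite.withDensity_of_ne_top (ae_of_all _ hGfin)
  have hvolG : (volume : Measure ℝ) ≪ volume.withDensity G :=
    withDensity_absolutelyContinuous' hG.aemeasurable (ae_of_all _ hGpos)
  have h1 : (volume.withDensity F).rnDeriv (volume.withDensity G)
      =ᵐ[volume.withDensity G] fun x => F x * volume.rnDeriv (volume.withDensity G) x :=
    Measure.rnDeriv_withDensity_left (hF.aemeasurable) (ae_of_all _ hFfin)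
  have h1' := hvolG.ae_le h1
  have h2 : volume.rnDeriv (volume.withDensity G)
      =ᵐ[volume] fun x => (G x)⁻¹ * volume.rnDeriv volume x :=
    Measure.rnDeriv_withDensity_right (volume : Measure ℝ) (volume : Measure ℝ) (f := G) hG.aemeasurable
      (ae_of_all _ hGpos) (ae_of_all _ hGfin)
  have h3 : volume.rnDeriv volume =ᵐ[volume] fun _ => 1 := Measure.rnDeriv_self (volume : Measure ℝ)
  filter_upwards [h1', h2, h3] with x hx1 hx2 hx3
  rw [hx1, hx2, hx3, mul_one]


set_option maxHeartbeats 1000000 in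
lemma KLdiv_cactus_eq (hn : 0 < n) (hr : r ∈ Set.Ioo (0:ℝ) 1)
    (hp : ∀ i ≤ N, p i ∈ Set.Ioc (0:ℝ) 1) (k : ℤ) {θ : ℝ} (hθ0 : 0 ≤ θ) (hθ1 : θ < 1) :
    KLdiv (cactusMeasure n N r p) (shiftMeasure (((k:ℝ) + θ)/n) (cactusMeasure n N r p))
      = ENNReal.ofReal ((1 - θ) * cSum N r p k + θ * cSum N r p (k+1)) := by
  have hn' : (0:ℝ) < n := by exact_mod_cast hn
  set q : ℤ → ℝ := extSeq N r p with hq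
  have hqpos : ∀ i, 0 < q i := extSeq_pos hr hp
  set a : ℝ := ((k:ℝ) + θ)/n with ha
  have han : a * n = (k:ℝ) + θ := by rw [ha, div_mul_cancel₀ _ hn'.ne']
  set fd : ℝ → ℝ := cactusDensity n N r p with hfd
  have hfd_pos : ∀ x, 0 < fd x := fun x => mul_pos hn' (hqpos _)
  have hfd_meas : Measurable fd :=
    measurable_const.mul ((measurable_from_top (f := q)).comp measurable_cactusIdx)
  set F : ℝ → ℝ≥0∞ := fun x => ENNReal.ofReal (fd x) with hF
  have hFmeas : Measurable F := ENNReal.measurable_ofReal.comp hfd_meas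
  have hFa_meas : Measurable (fun x => F (x - a)) :=
    hFmeas.comp (measurable_id.sub measurable_const)
  have hP : cactusMeasure n N r p = volume.withDensity F := rfl
  set ν : Measure ℝ := volume.withDensity (fun x => F (x - a)) with hν
  have hshift : shiftMeasure a (cactusMeasure n N r p) = ν := by
    rw [hP]; exact shiftMeasure_withDensity hFmeas a
  have hF0 : ∀ x, F x ≠ 0 := by
    intro x
    simp only [hF, ne_eq, ENNReal.ofReal_eq_zero, not_le]
    exact hfd_pos x
  have hFtop : ∀ x, F x ≠ ∞ := fun x => ENNReal.ofReal_ne_top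
  have hsfP : SigmaFinite (volume.withDensity F) :=
    SigmaFinite.withDensity_of_ne_top (ae_of_all _ hFtop)
  have hsfν : SigmaFinite ν :=
    SigmaFinite.withDensity_of_ne_top (ae_of_all _ (fun x => hFtop (x - a)))
  have hac : cactusMeasure n N r p ≪ ν := by
    rw [hP]
    exact (withDensity_absolutelyContinuous volume F).trans
      (withDensity_absolutelyContinuous' hFa_meas.aemeasurable
        (ae_of_all _ (fun x => hF0 (x - a))))
  have hPvol : cactusMeasure n N r p ≪ volume := by
    rw [hP]; exact withDensity_absolutelyContinuous _ _
  have hidx0 : ∀ᵐ x : ℝ, cactusIdx n x = Jfl n x := by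
    have := volume_bad_eq_zero hn 0
    simpa using this
  have hidxa : ∀ᵐ x : ℝ, cactusIdx n (x - a) = Jfl n (x - a) := volume_bad_eq_zero hn a
  set g : ℝ → ℝ := fun x => Real.log (q (Jfl n x)) - Real.log (q (Jfl n (x - a))) with hg
  have hRN := rnDeriv_withDensity_ofPos hFmeas hFa_meas (fun x => hF0 (x - a)) hFtop
    (fun x => hFtop (x - a))
  have hllr_vol : llr (cactusMeasure n N r p) ν =ᵐ[volume] g := by
    rw [hP]
    filter_upwards [hRN, hidx0, hidxa] with x hx h0 ha'
    show Real.log ((volume.withDensity F).rnDeriv ν x).toReal = g x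
    rw [hν, hx, ENNReal.toReal_mul, ENNReal.toReal_inv, hF, ENNReal.toReal_ofReal (hfd_pos x).le,
      ENNReal.toReal_ofReal (hfd_pos (x - a)).le, ← div_eq_mul_inv,
      Real.log_div (hfd_pos x).ne' (hfd_pos (x - a)).ne']
    have e1 : fd x = (n:ℝ) * q (cactusIdx n x) := rfl
    have e2 : fd (x - a) = (n:ℝ) * q (cactusIdx n (x - a)) := rfl
    rw [e1, e2, h0, ha', Real.log_mul hn'.ne' (hqpos _).ne',
      Real.log_mul hn'.ne' (hqpos _).ne', hg]
    ring
  have hllr : llr (cactusMeasure n N r p) ν =ᵐ[cactusMeasure n N r p] g := hPvol.ae_le hllr_vol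
  -- the partition
  set K : ℤ → Set ℝ := fun i => Set.Ioc (((i:ℝ) - 1/2)/n) (((i:ℝ) + 1/2)/n) with hK
  have hKmem : ∀ (i : ℤ) (x : ℝ), x ∈ K i ↔ Jfl n x = i := fun i x => (Jfl_eq_iff hn).symm
  have hKmeas : ∀ i, MeasurableSet (K i) := fun i => measurableSet_Ioc
  have hKdisj : Pairwise (Function.onFun Disjoint K) := by
    intro i j hij
    rw [Function.onFun, Set.disjoint_left]
    intro x hxi hxj
    exact hij (((hKmem i x).1 hxi).symm.trans ((hKmem j x).1 hxj))
  have hKcover : (⋃ i, K i) = Set.univ := by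
    ext x
    simp only [Set.mem_iUnion, Set.mem_univ, iff_true]
    exact ⟨Jfl n x, (hKmem _ _).2 rfl⟩
  set AI : ℤ → Set ℝ := fun i => Set.Ioc (((i:ℝ) - 1/2)/n) (((i:ℝ) - 1/2 + θ)/n) with hAI
  set BI : ℤ → Set ℝ := fun i => Set.Ioc (((i:ℝ) - 1/2 + θ)/n) (((i:ℝ) + 1/2)/n) with hBI
  have hABK : ∀ i, AI i ∪ BI i = K i := by
    intro i
    apply Set.Ioc_union_Ioc_eq_Ioc
    · exact (div_le_div_iff_of_pos_right hn').2 (by linarith)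
    · exact (div_le_div_iff_of_pos_right hn').2 (by linarith)
  have hmemA : ∀ (i : ℤ) (x : ℝ), x ∈ AI i → Jfl n x = i ∧ Jfl n (x - a) = i - k - 1 := by
    intro i x hx
    rw [hAI, Set.mem_Ioc, div_lt_iff₀ hn', le_div_iff₀ hn'] at hx
    obtain ⟨hx1, hx2⟩ := hx
    have hxa : (x - a) * n = x * n - ((k:ℝ) + θ) := by rw [sub_mul, han]
    constructor
    · rw [Jfl_eq_iff hn, Set.mem_Ioc, div_lt_iff₀ hn', le_div_iff₀ hn']
      constructor <;> [linarith; linarith]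
    · rw [Jfl_eq_iff hn, Set.mem_Ioc, div_lt_iff₀ hn', le_div_iff₀ hn']
      push_cast
      constructor <;> [nlinarith [hxa]; nlinarith [hxa]]
  have hmemB : ∀ (i : ℤ) (x : ℝ), x ∈ BI i → Jfl n x = i ∧ Jfl n (x - a) = i - k := by
    intro i x hx
    rw [hBI, Set.mem_Ioc, div_lt_iff₀ hn', le_div_iff₀ hn'] at hx
    obtain ⟨hx1, hx2⟩ := hx
    have hxa : (x - a) * n = x * n - ((k:ℝ) + θ) := by rw [sub_mul, han]
    constructor
    · rw [Jfl_eq_iff hn, Set.mem_Ioc, div_lt_iff₀ hn', le_div_iff₀ hn']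
      constructor <;> [linarith; linarith]
    · rw [Jfl_eq_iff hn, Set.mem_Ioc, div_lt_iff₀ hn', le_div_iff₀ hn']
      push_cast
      constructor <;> [nlinarith [hxa]; nlinarith [hxa]]
  -- the step function G
  set G : ℝ → ℝ := fun x =>
    (n:ℝ) * (q (Jfl n x) * (Real.log (q (Jfl n x)) - Real.log (q (Jfl n (x - a))))) with hG
  have hJmeas : Measurable (Jfl n) := measurable_Jfl
  have hJameas : Measurable (fun x => Jfl n (x - a)) :=
    hJmeas.comp (measurable_id.sub measurable_const)
  have m1 : Measurable (fun x => q (Jfl n x)) := (measurable_from_top (f := q)).comp hJmeas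
  have m2 : Measurable (fun x => q (Jfl n (x - a))) := (measurable_from_top (f := q)).comp hJameas
  have hGmeas : Measurable G := measurable_const.mul
    (m1.mul ((Real.measurable_log.comp m1).sub (Real.measurable_log.comp m2)))
  have hgmeas : Measurable g := (Real.measurable_log.comp m1).sub (Real.measurable_log.comp m2)
  -- summable bound
  obtain ⟨A, L, hA, hL, hlog⟩ := exists_log_bound hr hp
  set b : ℤ → ℝ := fun i => (n:ℝ) * (q i * (|Real.log (q i)| + |Real.log (q (i - (k+1)))| +
    |Real.log (q (i - k))|)) with hb
  have hb_nonneg : ∀ i, 0 ≤ b i := by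
    intro i
    apply mul_nonneg hn'.le
    apply mul_nonneg (hqpos i).le
    positivity
  have hb_sum : Summable b := by
    apply Summable.mul_left
    apply summable_extSeq_mul hr hp
      (c0 := 3*A + L * (((k+1).natAbs : ℝ) + (k.natAbs : ℝ))) (c1 := 3*L)
    intro i
    have h1 := hlog i
    have h2 := hlog (i - (k+1))
    have h3 := hlog (i - k)
    have e2 : (((i - (k+1)).natAbs : ℝ)) ≤ (i.natAbs : ℝ) + ((k+1).natAbs : ℝ) := by
      exact_mod_cast Int.natAbs_sub_le i (k+1)
    have e3 : (((i - k).natAbs : ℝ)) ≤ (i.natAbs : ℝ) + (k.natAbs : ℝ) := by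
      exact_mod_cast Int.natAbs_sub_le i k
    have habs : |(|Real.log (q i)| + |Real.log (q (i - (k+1)))| + |Real.log (q (i - k))|)|
        = |Real.log (q i)| + |Real.log (q (i - (k+1)))| + |Real.log (q (i - k))| := by
      apply abs_of_nonneg; positivity
    rw [habs]
    nlinarith
  have hGbound : ∀ (i : ℤ), ∀ x ∈ K i, |G x| ≤ b i := by
    intro i x hx
    have hJx : Jfl n x = i := (hKmem i x).1 hx
    have hx' : x ∈ AI i ∨ x ∈ BI i := by rw [← Set.mem_union, hABK]; exact hx
    have key : ∀ j : ℤ, Jfl n (x - a) = j →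
        |Real.log (q i) - Real.log (q j)| ≤ |Real.log (q i)| + |Real.log (q j)| :=
      fun j _ => abs_sub _ _
    rcases hx' with h | h
    · have hJxa := (hmemA i x h).2
      have hik : i - k - 1 = i - (k+1) := by ring
      simp only [hG]
      rw [hJx, hJxa, hik]
      have : |(n:ℝ) * (q i * (Real.log (q i) - Real.log (q (i - (k+1)))))|
          = (n:ℝ) * (q i * |Real.log (q i) - Real.log (q (i - (k+1)))|) := by
        rw [abs_mul, abs_mul, abs_of_pos hn', abs_of_pos (hqpos i)]
      rw [this, hb]
      have hd := abs_sub (Real.log (q i)) (Real.log (q (i - (k+1))))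
      have hnn : (0:ℝ) ≤ |Real.log (q (i - k))| := abs_nonneg _
      apply mul_le_mul_of_nonneg_left _ hn'.le
      apply mul_le_mul_of_nonneg_left _ (hqpos i).le
      linarith
    · have hJxa := (hmemB i x h).2
      simp only [hG]
      rw [hJx, hJxa]
      have : |(n:ℝ) * (q i * (Real.log (q i) - Real.log (q (i - k))))|
          = (n:ℝ) * (q i * |Real.log (q i) - Real.log (q (i - k))|) := by
        rw [abs_mul, abs_mul, abs_of_pos hn', abs_of_pos (hqpos i)]
      rw [this, hb]
      have hd := abs_sub (Real.log (q i)) (Real.log (q (i - k)))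
      have hnn : (0:ℝ) ≤ |Real.log (q (i - (k+1)))| := abs_nonneg _
      apply mul_le_mul_of_nonneg_left _ hn'.le
      apply mul_le_mul_of_nonneg_left _ (hqpos i).le
      linarith
  -- integrability of G
  have hKvol : ∀ i, volume (K i) = ENNReal.ofReal (1/(n:ℝ)) := by
    intro i
    rw [hK]
    simp only [Real.volume_Ioc]
    congr 1
    field_simp
    norm_num
  have hfin : ∫⁻ x, ‖G x‖₊ ∂volume < ∞ := by
    have hsplit : ∫⁻ x, ‖G x‖₊ ∂volume = ∑' i, ∫⁻ x in K i, ‖G x‖₊ ∂volume := by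
      rw [← setLIntegral_univ, ← hKcover, lintegral_iUnion hKmeas hKdisj]
    rw [hsplit]
    have hpiece : ∀ i, ∫⁻ x in K i, ‖G x‖₊ ∂volume ≤ ENNReal.ofReal (b i * (1/n)) := by
      intro i
      calc ∫⁻ x in K i, ‖G x‖₊ ∂volume ≤ ∫⁻ _ in K i, ENNReal.ofReal (b i) ∂volume := by
            apply setLIntegral_mono measurable_const
            intro x hx
            rw [← enorm_eq_nnnorm, Real.enorm_eq_ofReal_abs]
            exact ENNReal.ofReal_le_ofReal (hGbound i x hx)
        _ = ENNReal.ofReal (b i) * volume (K i) := setLIntegral_const _ _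
        _ = ENNReal.ofReal (b i * (1/n)) := by
            rw [hKvol i, ← ENNReal.ofReal_mul (hb_nonneg i)]
    calc ∑' i, ∫⁻ x in K i, ‖G x‖₊ ∂volume ≤ ∑' i, ENNReal.ofReal (b i * (1/n)) :=
          ENNReal.tsum_le_tsum hpiece
      _ = ENNReal.ofReal (∑' i, b i * (1/n)) :=
          (ENNReal.ofReal_tsum_of_nonneg (fun i => mul_nonneg (hb_nonneg i) (by positivity))
            (hb_sum.mul_right _)).symm
      _ < ∞ := ENNReal.ofReal_lt_top
  have hGint : Integrable G volume := ⟨hGmeas.aestronglyMeasurable, hfin⟩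
  -- transfer integrability to llr
  have hgF : ∀ᵐ x ∂volume, g x * (F x).toReal = G x := by
    filter_upwards [hidx0] with x h0
    have e1 : (F x).toReal = fd x := ENNReal.toReal_ofReal (hfd_pos x).le
    have e2 : fd x = (n:ℝ) * q (cactusIdx n x) := rfl
    rw [e1, e2, h0, hg, hG]
    ring
  have hFlt : ∀ᵐ x ∂volume, F x < ∞ := ae_of_all _ (fun x => (hFtop x).lt_top)
  have hint_g : Integrable g (cactusMeasure n N r p) := by
    rw [hP, integrable_withDensity_iff hFmeas hFlt]
    exact hGint.congr (hgF.mono fun x hx => hx.symm)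
  have hint_llr : Integrable (llr (cactusMeasure n N r p) ν) (cactusMeasure n N r p) :=
    hint_g.congr hllr.symm
  -- piece integrals
  have hAvol : ∀ i : ℤ, volume (AI i) = ENNReal.ofReal (θ/n) := by
    intro i
    rw [hAI]
    simp only [Real.volume_Ioc]
    congr 1
    field_simp
    ring
  have hBvol : ∀ i : ℤ, volume (BI i) = ENNReal.ofReal ((1-θ)/n) := by
    intro i
    rw [hBI]
    simp only [Real.volume_Ioc]
    congr 1
    field_simp
    ring
  have hik : ∀ i : ℤ, i - k - 1 = i - (k+1) := fun i => by ring
  have hintA : ∀ i : ℤ, ∫ x in AI i, G x ∂volume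
      = θ * (q i * (Real.log (q i) - Real.log (q (i - (k+1))))) := by
    intro i
    have hconst : Set.EqOn G
        (fun _ => (n:ℝ) * (q i * (Real.log (q i) - Real.log (q (i - (k+1)))))) (AI i) := by
      intro x hx
      simp only [hG]
      rw [(hmemA i x hx).1, (hmemA i x hx).2, hik i]
    have hms : MeasurableSet (AI i) := by rw [hAI]; exact measurableSet_Ioc
    rw [setIntegral_congr_fun hms hconst, setIntegral_const, measureReal_def, hAvol i,
      ENNReal.toReal_ofReal (div_nonneg hθ0 hn'.le), smul_eq_mul]
    field_simp
  have hintB : ∀ i : ℤ, ∫ x in BI i, G x ∂volume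
      = (1-θ) * (q i * (Real.log (q i) - Real.log (q (i - k)))) := by
    intro i
    have hconst : Set.EqOn G
        (fun _ => (n:ℝ) * (q i * (Real.log (q i) - Real.log (q (i - k))))) (BI i) := by
      intro x hx
      simp only [hG]
      rw [(hmemB i x hx).1, (hmemB i x hx).2]
    have hms : MeasurableSet (BI i) := by rw [hBI]; exact measurableSet_Ioc
    rw [setIntegral_congr_fun hms hconst, setIntegral_const, measureReal_def, hBvol i,
      ENNReal.toReal_ofReal (div_nonneg (by linarith) hn'.le), smul_eq_mul]
    field_simp
  -- the double partition
  set s2 : ℤ × Bool → Set ℝ := fun ib => cond ib.2 (BI ib.1) (AI ib.1) with hs2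
  have hs2meas : ∀ ib, MeasurableSet (s2 ib) := by
    rintro ⟨i, b⟩
    cases b
    · show MeasurableSet (AI i); rw [hAI]; exact measurableSet_Ioc
    · show MeasurableSet (BI i); rw [hBI]; exact measurableSet_Ioc
  have hsub : ∀ (b : Bool) (m : ℤ), (cond b (BI m) (AI m)) ⊆ K m := by
    intro b m
    cases b
    · show AI m ⊆ K m; rw [← hABK]; exact Set.subset_union_left
    · show BI m ⊆ K m; rw [← hABK]; exact Set.subset_union_right
  have hABdisj : ∀ i : ℤ, Disjoint (AI i) (BI i) := by
    intro i
    rw [Set.disjoint_left]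
    intro x hx1 hx2
    rw [hAI, Set.mem_Ioc] at hx1
    rw [hBI, Set.mem_Ioc] at hx2
    linarith [hx1.2, hx2.1]
  have hs2disj : Pairwise (Function.onFun Disjoint s2) := by
    rintro ⟨i, bi⟩ ⟨j, bj⟩ hne
    simp only [Function.onFun]
    by_cases hij : i = j
    · subst hij
      have hbb : bi ≠ bj := fun h => hne (by rw [h])
      cases bi <;> cases bj
      · exact absurd rfl hbb
      · exact hABdisj i
      · exact (hABdisj i).symm
      · exact absurd rfl hbb
    · exact (hKdisj hij).mono (hsub bi i) (hsub bj j)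
  have hs2cover : (⋃ ib, s2 ib) = Set.univ := by
    ext x
    simp only [Set.mem_iUnion, Set.mem_univ, iff_true]
    have hxK : x ∈ K (Jfl n x) := (hKmem _ _).2 rfl
    rw [← hABK] at hxK
    rcases hxK with h | h
    · exact ⟨(Jfl n x, false), h⟩
    · exact ⟨(Jfl n x, true), h⟩
  have hs2int : IntegrableOn G (⋃ ib, s2 ib) volume := by
    rw [hs2cover]
    exact integrableOn_univ.2 hGint
  have hsum := hasSum_integral_iUnion hs2meas hs2disj hs2int
  have hts : ∑' ib : ℤ × Bool, ∫ x in s2 ib, G x ∂volume = ∫ x, G x ∂volume := by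
    rw [hsum.tsum_eq, hs2cover, setIntegral_univ]
  have hval : ∫ x, G x ∂volume = (1 - θ) * cSum N r p k + θ * cSum N r p (k+1) := by
    rw [← hts, Summable.tsum_prod' hsum.summable (fun b => Summable.of_finite)]
    have hperi : ∀ i : ℤ, (∑' b : Bool, ∫ x in s2 (i, b), G x ∂volume)
        = θ * (q i * (Real.log (q i) - Real.log (q (i - (k+1)))))
          + (1-θ) * (q i * (Real.log (q i) - Real.log (q (i - k)))) := by
      intro i
      rw [tsum_bool]
      show (∫ x in AI i, G x ∂volume) + (∫ x in BI i, G x ∂volume) = _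
      rw [hintA i, hintB i]
    have hsumm1 : Summable (fun i : ℤ =>
        q i * (Real.log (q i) - Real.log (q (i - (k+1))))) := by
      rw [hq]; exact summable_cSum_term hr hp (k+1)
    have hsumm2 : Summable (fun i : ℤ =>
        q i * (Real.log (q i) - Real.log (q (i - k)))) := by
      rw [hq]; exact summable_cSum_term hr hp k
    rw [tsum_congr hperi,
      Summable.tsum_add (hsumm1.mul_left θ) (hsumm2.mul_left (1-θ)),
      tsum_mul_left, tsum_mul_left]
    have e1 : cSum N r p (k+1)
        = ∑' i : ℤ, q i * (Real.log (q i) - Real.log (q (i - (k+1)))) := by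
      rw [cSum, hq]
    have e2 : cSum N r p k
        = ∑' i : ℤ, q i * (Real.log (q i) - Real.log (q (i - k))) := by
      rw [cSum, hq]
    rw [← e1, ← e2]
    ring
  -- assembly
  rw [hshift]
  have hcond : cactusMeasure n N r p ≪ ν
      ∧ Integrable (llr (cactusMeasure n N r p) ν) (cactusMeasure n N r p) := ⟨hac, hint_llr⟩
  rw [KLdiv, if_pos hcond]
  congr 1
  have hP2 : cactusMeasure n N r p
      = volume.withDensity (fun x => ((fd x).toNNReal : ℝ≥0∞)) := rfl
  calc ∫ x, llr (cactusMeasure n N r p) ν x ∂(cactusMeasure n N r p)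
      = ∫ x, g x ∂(cactusMeasure n N r p) := integral_congr_ae hllr
    _ = ∫ x, ((fd x).toNNReal : ℝ) • g x ∂volume := by
        rw [hP2, integral_withDensity_eq_integral_smul₀
          (hfd_meas.real_toNNReal.aemeasurable) g]
        simp only [NNReal.smul_def]
    _ = ∫ x, G x ∂volume := by
        apply integral_congr_ae
        filter_upwards [hidx0] with x h0
        rw [Real.coe_toNNReal _ (hfd_pos x).le, smul_eq_mul]
        have e2 : fd x = (n:ℝ) * q (cactusIdx n x) := rfl
        rw [e2, h0, hg, hG]
        ring
    _ = (1 - θ) * cSum N r p k + θ * cSum N r p (k+1) := hval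


end CactusAux

/-- The maximal KL-divergence of a cactus mechanism over shifts `|a| ≤ 1` equals the maximum
over integer shifts `|k| ≤ n` of `Σ_{i∈ℤ} p_i log(p_i / p_{i+k})`. -/
theorem cactus_sup_klDiv_eq_max (n N : ℕ) (hn : 0 < n) (hnN : n < N)
    (r : ℝ) (hr : r ∈ Set.Ioo (0 : ℝ) 1) (p : ℕ → ℝ)
    (hp : ∀ i ≤ N, p i ∈ Set.Ioc (0 : ℝ) 1)
    (hnorm : Snorm N r p = 1) :
    (⨆ (a : ℝ) (_ : |a| ≤ 1),
        KLdiv (cactusMeasure n N r p) (shiftMeasure a (cactusMeasure n N r p))) =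
      ⨆ (k : ℤ) (_ : |k| ≤ (n : ℤ)),
        ENNReal.ofReal
          (∑' i : ℤ, extSeq N r p i * Real.log (extSeq N r p i / extSeq N r p (i + k))) := by
  have hn' : (0:ℝ) < n := by exact_mod_cast hn
  apply le_antisymm
  · apply iSup₂_le
    intro a ha
    rw [abs_le] at ha
    set k : ℤ := ⌊(n:ℝ) * a⌋ with hkdef
    set θ : ℝ := Int.fract ((n:ℝ) * a) with hθdef
    have hθ0 : 0 ≤ θ := Int.fract_nonneg _
    have hθ1 : θ < 1 := Int.fract_lt_one _
    have hfr : (k:ℝ) + θ = (n:ℝ) * a := Int.floor_add_fract _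
    have hasplit : a = ((k:ℝ) + θ)/n := by
      rw [hfr]
      field_simp
    have hk_low : -(n:ℤ) ≤ k := by
      rw [hkdef, Int.le_floor]
      push_cast
      nlinarith [ha.1]
    have hk_hi : (k:ℝ) ≤ (n:ℝ) * a := Int.floor_le _
    have hk_up : k ≤ (n:ℤ) := by
      have : (k:ℝ) ≤ (n:ℝ) := by nlinarith [ha.2]
      exact_mod_cast this
    rw [hasplit, KLdiv_cactus_eq hn hr hp k hθ0 hθ1]
    have hterm : ∀ j : ℤ, |j| ≤ (n:ℤ) → ENNReal.ofReal (cSum N r p j) ≤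
        ⨆ (k : ℤ) (_ : |k| ≤ (n : ℤ)), ENNReal.ofReal
          (∑' i : ℤ, extSeq N r p i * Real.log (extSeq N r p i / extSeq N r p (i + k))) := by
      intro j hj
      exact le_iSup₂_of_le j hj (le_of_eq (by rw [cSum_eq_rhs hr hp j]))
    by_cases hθz : θ = 0
    · rw [hθz]
      norm_num
      exact hterm k (abs_le.2 ⟨hk_low, hk_up⟩)
    · have hθpos : 0 < θ := lt_of_le_of_ne hθ0 (Ne.symm hθz)
      have hk_up' : k < (n:ℤ) := by
        rcases lt_or_eq_of_le hk_up with h | h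
        · exact h
        · exfalso
          apply hθz
          rw [hθdef, Int.fract, ← hkdef, h]
          have h1 : (n:ℝ) * a ≤ (n:ℝ) := by nlinarith [ha.2]
          have h2 : ((n:ℤ):ℝ) ≤ (n:ℝ) * a := by rw [← h]; exact hk_hi
          push_cast at h2 ⊢
          linarith
      have hcomb : ∀ c d : ℝ, ENNReal.ofReal ((1-θ) * c + θ * d)
          ≤ max (ENNReal.ofReal c) (ENNReal.ofReal d) := by
        intro c d
        rcases le_total c d with h | h
        · exact le_trans (ENNReal.ofReal_le_ofReal (by nlinarith)) (le_max_right _ _)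
        · exact le_trans (ENNReal.ofReal_le_ofReal (by nlinarith)) (le_max_left _ _)
      refine le_trans (hcomb _ _) (max_le ?_ ?_)
      · exact hterm k (abs_le.2 ⟨hk_low, hk_up⟩)
      · exact hterm (k+1) (abs_le.2 ⟨by omega, by omega⟩)
  · apply iSup₂_le
    intro k hk
    have h0 : ENNReal.ofReal
        (∑' i : ℤ, extSeq N r p i * Real.log (extSeq N r p i / extSeq N r p (i + k)))
        = KLdiv (cactusMeasure n N r p) (shiftMeasure (((k:ℝ) + 0)/n) (cactusMeasure n N r p)) := by
      rw [KLdiv_cactus_eq hn hr hp k le_rfl zero_lt_one, cSum_eq_rhs hr hp k]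
      norm_num
    rw [h0]
    have hj : |((k:ℝ) + 0)/n| ≤ 1 := by
      rw [abs_le] at hk ⊢
      have h1 : (-(n:ℤ) : ℝ) ≤ (k:ℝ) := by exact_mod_cast hk.1
      have h2 : ((k:ℤ) : ℝ) ≤ ((n:ℤ) : ℝ) := by exact_mod_cast hk.2
      push_cast at h1 h2
      constructor
      · rw [le_div_iff₀ hn']
        linarith
      · rw [div_le_one hn']
        linarith
    exact le_iSup₂_of_le (((k:ℝ) + 0)/n) hj le_rfl


end
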